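/- Let f1, f2 be C² with bounded derivatives and let u solve u' = f1(t,u) + f2(t,u) on [0,h]. The fully discrete backward-Euler Lie–Trotter scheme ṽ = u0 + h f1(h, ṽ), v1 = ṽ + h f2(h, v1) satisfies |u(h) − v1| ≤ C h² for a constant C independent of h, for all sufficiently small h > 0. -/

import Mathlib

open Set

private lemma lip_of_bound (f : ℝ → ℝ → ℝ) (hf : ContDiff ℝ 2 (Function.uncurry f)) (M : ℝ)
    (hM : ∀ i ≤ 2, ∀ p : ℝ × ℝ, ‖iteratedFDeriv ℝ i (Function.uncurry f) p‖ ≤ M) :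
    ∀ a x b y : ℝ, |f a x - f b y| ≤ M * (|a - b| + |x - y|) := by
  have hM0 : 0 ≤ M := le_trans (norm_nonneg _) (hM 0 (by norm_num) (0,0))
  have hdiff : Differentiable ℝ (Function.uncurry f) :=
    hf.differentiable (by norm_num)
  have hfd : ∀ p : ℝ × ℝ, ‖fderiv ℝ (Function.uncurry f) p‖ ≤ M := by
    intro p
    apply ContinuousLinearMap.opNorm_le_bound _ hM0
    intro v
    have h1 : fderiv ℝ (Function.uncurry f) p v
        = iteratedFDeriv ℝ 1 (Function.uncurry f) p (fun _ => v) := by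
      rw [iteratedFDeriv_one_apply]
    rw [h1]
    calc ‖iteratedFDeriv ℝ 1 (Function.uncurry f) p (fun _ => v)‖
        ≤ ‖iteratedFDeriv ℝ 1 (Function.uncurry f) p‖ * ∏ _i : Fin 1, ‖v‖ :=
          ContinuousMultilinearMap.le_opNorm _ _
      _ ≤ M * ‖v‖ := by
          simp only [Finset.prod_const, Finset.card_univ, Fintype.card_fin, pow_one]
          exact mul_le_mul_of_nonneg_right (hM 1 (by norm_num) p) (norm_nonneg v)
  have hlip : LipschitzWith M.toNNReal (Function.uncurry f) :=
    lipschitzWith_of_nnnorm_fderiv_le hdiff (fun p => by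
      rw [← NNReal.coe_le_coe, coe_nnnorm, Real.coe_toNNReal _ hM0]; exact hfd p)
  intro a x b y
  have := hlip.dist_le_mul (a, x) (b, y)
  rw [Real.coe_toNNReal _ hM0, Prod.dist_eq] at this
  simp only [Real.dist_eq] at this
  calc |f a x - f b y| ≤ M * max |a - b| |x - y| := this
    _ ≤ M * (|a - b| + |x - y|) := by
        apply mul_le_mul_of_nonneg_left _ hM0
        exact max_le (le_add_of_nonneg_right (abs_nonneg _)) (le_add_of_nonneg_left (abs_nonneg _))

private lemma val_bound (f : ℝ → ℝ → ℝ) (M : ℝ)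
    (hM : ∀ i ≤ 2, ∀ p : ℝ × ℝ, ‖iteratedFDeriv ℝ i (Function.uncurry f) p‖ ≤ M) :
    ∀ t x : ℝ, |f t x| ≤ M := by
  intro t x
  have := hM 0 (by norm_num) (t, x)
  rwa [norm_iteratedFDeriv_zero, Function.uncurry, Real.norm_eq_abs] at this

/-- Local truncation error of the fully discrete backward-Euler Lie–Trotter scheme:
`ṽ = u0 + h f1(h, ṽ)`, `v1 = ṽ + h f2(h, v1)` satisfies `|u(h) − v1| ≤ C h²`. -/
theorem stmt_13 (f1 f2 : ℝ → ℝ → ℝ)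
    (hf1 : ContDiff ℝ 2 (Function.uncurry f1))
    (hf2 : ContDiff ℝ 2 (Function.uncurry f2))
    (M : ℝ)
    (hM1 : ∀ i ≤ 2, ∀ p : ℝ × ℝ, ‖iteratedFDeriv ℝ i (Function.uncurry f1) p‖ ≤ M)
    (hM2 : ∀ i ≤ 2, ∀ p : ℝ × ℝ, ‖iteratedFDeriv ℝ i (Function.uncurry f2) p‖ ≤ M)
    (u0 : ℝ) :
    ∃ C > (0:ℝ), ∃ h0 > (0:ℝ), ∀ h : ℝ, 0 < h → h ≤ h0 →
      ∀ u : ℝ → ℝ, u 0 = u0 →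
        (∀ t ∈ Icc (0:ℝ) h, HasDerivAt u (f1 t (u t) + f2 t (u t)) t) →
        ∀ vtil v1 : ℝ,
          vtil = u0 + h * f1 h vtil →
          v1 = vtil + h * f2 h v1 →
          |u h - v1| ≤ C * h ^ 2 := by
  have hM0 : 0 ≤ M := le_trans (norm_nonneg _) (hM1 0 (by norm_num) (0,0))
  have hb1 := val_bound f1 M hM1
  have hb2 := val_bound f2 M hM2
  have hlip1 := lip_of_bound f1 hf1 M hM1
  have hlip2 := lip_of_bound f2 hf2 M hM2
  refine ⟨14*M^2 + 4*M + 1, by positivity, 1/(2*(M+1)), by positivity, ?_⟩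
  intro h hh hh0 u hu0 hu vtil v1 hvt hv1
  have hMh : M * h ≤ 1/2 := by
    have h1 : M * h ≤ M * (1/(2*(M+1))) := mul_le_mul_of_nonneg_left hh0 hM0
    have h2 : (0:ℝ) < 2*(M+1) := by linarith
    rw [mul_one_div, le_div_iff₀ h2] at h1
    nlinarith [mul_nonneg hM0 hh.le]
  have hIcc : Convex ℝ (Icc (0:ℝ) h) := convex_Icc _ _
  set g : ℝ → ℝ := fun t => f1 t (u t) + f2 t (u t) with hg
  have hgb : ∀ t ∈ Icc (0:ℝ) h, ‖g t‖ ≤ 2*M := by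
    intro t _
    rw [Real.norm_eq_abs]
    calc |g t| ≤ |f1 t (u t)| + |f2 t (u t)| := abs_add_le _ _
      _ ≤ 2*M := by linarith [hb1 t (u t), hb2 t (u t)]
  have hulip : ∀ s ∈ Icc (0:ℝ) h, ∀ t ∈ Icc (0:ℝ) h, |u t - u s| ≤ 2*M * |t - s| := by
    intro s hs t ht
    have := Convex.norm_image_sub_le_of_norm_hasDerivWithin_le
      (f' := g) (fun x hx => (hu x hx).hasDerivWithinAt) hgb hIcc hs ht
    simpa [Real.norm_eq_abs] using this
  have hh0m : (0:ℝ) ∈ Icc (0:ℝ) h := ⟨le_refl 0, hh.le⟩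
  have hhm : h ∈ Icc (0:ℝ) h := ⟨hh.le, le_refl h⟩
  have hglip : ∀ t ∈ Icc (0:ℝ) h, ‖g t - g h‖ ≤ (2*M*(1+2*M)) * h := by
    intro t ht
    have h1 := hlip1 t (u t) h (u h)
    have h2 := hlip2 t (u t) h (u h)
    have hu' : |u t - u h| ≤ 2*M*|t - h| := hulip h hhm t ht
    have hth : |t - h| ≤ h := by
      rw [abs_sub_comm, abs_of_nonneg (by linarith [ht.2])]
      linarith [ht.1]
    have key : |g t - g h| ≤ |f1 t (u t) - f1 h (u h)| + |f2 t (u t) - f2 h (u h)| := by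
      have e : g t - g h = (f1 t (u t) - f1 h (u h)) + (f2 t (u t) - f2 h (u h)) := by
        simp only [hg]; ring
      rw [e]; exact abs_add_le _ _
    rw [Real.norm_eq_abs]
    nlinarith [mul_le_mul_of_nonneg_left hu' hM0,
      mul_le_mul_of_nonneg_left hth hM0,
      mul_le_mul_of_nonneg_left hth (mul_nonneg hM0 hM0),
      abs_nonneg (t - h)]
  have hwd : ∀ t ∈ Icc (0:ℝ) h, HasDerivAt (fun s => u s - s * g h) (g t - g h) t :=
    fun t ht => (hu t ht).sub (hasDerivAt_mul_const (g h))
  have hR : |u h - u 0 - h * g h| ≤ (2*M*(1+2*M)) * h * h := by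
    have key := Convex.norm_image_sub_le_of_norm_hasDerivWithin_le
      (f := fun s => u s - s * g h) (f' := fun t => g t - g h)
      (fun x hx => (hwd x hx).hasDerivWithinAt) hglip hIcc hh0m hhm
    simp only [Real.norm_eq_abs] at key
    calc |u h - u 0 - h * g h| = |(u h - h * g h) - (u 0 - 0 * g h)| := by
          congr 1; ring
      _ ≤ (2*M*(1+2*M)) * h * |h - 0| := key
      _ = (2*M*(1+2*M)) * h * h := by rw [sub_zero, abs_of_pos hh]
  have hvtb : |vtil - u0| ≤ M * h := by
    rw [hvt]
    calc |u0 + h * f1 h vtil - u0| = |h| * |f1 h vtil| := by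
          rw [← abs_mul]; congr 1; ring
      _ ≤ h * M := by
          rw [abs_of_pos hh]
          exact mul_le_mul_of_nonneg_left (hb1 _ _) hh.le
      _ = M * h := by ring
  have huhb : |u h - u0| ≤ 2*M*h := by
    have := hulip 0 hh0m h hhm
    rw [hu0, sub_zero, abs_of_pos hh] at this
    exact this
  have huv : |u h - vtil| ≤ 3*M*h := by
    calc |u h - vtil| ≤ |u h - u0| + |u0 - vtil| := abs_sub_le _ _ _
      _ ≤ 2*M*h + M*h := by
          rw [abs_sub_comm] at hvtb
          exact add_le_add huhb hvtb
      _ = 3*M*h := by ring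
  have hv1' : v1 = u0 + h * f1 h vtil + h * f2 h v1 := by
    linear_combination hv1 + hvt
  have e : u h - v1 = (u h - u 0 - h * g h) + h * (f1 h (u h) - f1 h vtil)
      + h * (f2 h (u h) - f2 h v1) := by
    have eg : g h = f1 h (u h) + f2 h (u h) := rfl
    rw [eg, hu0]
    linear_combination -hv1'
  have hd1 : |f1 h (u h) - f1 h vtil| ≤ M * |u h - vtil| := by
    have := hlip1 h (u h) h vtil
    simpa using this
  have hd2 : |f2 h (u h) - f2 h v1| ≤ M * |u h - v1| := by
    have := hlip2 h (u h) h v1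
    simpa using this
  have habs : |u h - v1| ≤ (2*M*(1+2*M))*h*h + h*(M*(3*M*h)) + h*(M*|u h - v1|) := by
    calc |u h - v1| = |(u h - u 0 - h * g h) + h * (f1 h (u h) - f1 h vtil)
          + h * (f2 h (u h) - f2 h v1)| := by rw [e]
      _ ≤ |u h - u 0 - h * g h| + |h * (f1 h (u h) - f1 h vtil)|
          + |h * (f2 h (u h) - f2 h v1)| :=
        (abs_add_le _ _).trans (add_le_add_left (abs_add_le _ _) _)
      _ ≤ (2*M*(1+2*M))*h*h + h*(M*(3*M*h)) + h*(M*|u h - v1|) := by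
          rw [abs_mul, abs_mul, abs_of_pos hh]
          refine add_le_add (add_le_add hR ?_) ?_
          · exact mul_le_mul_of_nonneg_left (hd1.trans
              (mul_le_mul_of_nonneg_left huv hM0)) hh.le
          · exact mul_le_mul_of_nonneg_left hd2 hh.le
  nlinarith [mul_le_mul_of_nonneg_right hMh (abs_nonneg (u h - v1)),
    abs_nonneg (u h - v1), sq_nonneg h, hh.le]
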